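/- For every φ ∈ ℝ with sin φ ≠ 0 and every Schwartz function f : ℝ^k → ℂ, the Shale–Weil operator R(k_φ) preserves the L² norm: ∫_{ℝ^k} |[R(k_φ)f](w)|² dw = ∫_{ℝ^k} |f(v)|² dv. -/

import Mathlib

open scoped RealInnerProductSpace
open MeasureTheory

/-- ℝ^k as a Euclidean space. -/
abbrev E (k : ℕ) := EuclideanSpace ℝ (Fin k)

/-- `e(t) = exp(2πit)`. -/
noncomputable def e (t : ℝ) : ℂ := Complex.exp (2 * Real.pi * Complex.I * t)

/-- The Shale–Weil operator attached to the rotation `k_φ` (for `sin φ ≠ 0`):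
`[R(k_φ)f](w) = |sin φ|^{−k/2} ∫ e((½(‖w‖²+‖v‖²)cos φ − w·v)/sin φ) f(v) dv`. -/
noncomputable def Rk {k : ℕ} (φ : ℝ) (f : E k → ℂ) : E k → ℂ :=
  fun w => ((|Real.sin φ| ^ (-(k : ℝ) / 2) : ℝ) : ℂ) *
    ∫ v : E k, e (((1 / 2) * (‖w‖ ^ 2 + ‖v‖ ^ 2) * Real.cos φ - ⟪w, v⟫) / Real.sin φ) * f v


open Complex
open scoped FourierTransform

lemma e_add (x y : ℝ) : e (x + y) = e x * e y := by
  simp only [e, ← Complex.exp_add]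
  push_cast
  ring_nf

lemma abs_e (t : ℝ) : ‖e t‖ = 1 := by
  rw [e, Complex.norm_exp]
  have h : (2 * (Real.pi:ℂ) * Complex.I * (t:ℂ)).re = 0 := by simp
  rw [h, Real.exp_zero]

lemma contDiff_cexp_real : ContDiff ℝ ⊤ Complex.exp :=
  (Complex.contDiff_exp : ContDiff ℂ ⊤ Complex.exp).restrict_scalars ℝ

lemma norm_iteratedFDeriv_cexp (n : ℕ) (z : ℂ) :
    ‖iteratedFDeriv ℝ n Complex.exp z‖ = ‖Complex.exp z‖ := by
  induction n generalizing z with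
  | zero => simp [norm_iteratedFDeriv_zero]
  | succ n ih =>
    have hfd : fderiv ℝ Complex.exp
        = (⇑(ContinuousLinearMap.mulₗᵢ ℝ ℂ)) ∘ Complex.exp := by
      ext1 w
      rw [(Complex.hasDerivAt_exp w).complexToReal_fderiv.fderiv]
      exact ContinuousLinearMap.ext fun v => by
        simp [ContinuousLinearMap.mulₗᵢ, smul_eq_mul, mul_comm]
    rw [← norm_iteratedFDeriv_fderiv, hfd,
      (ContinuousLinearMap.mulₗᵢ ℝ ℂ).norm_iteratedFDeriv_comp_left (contDiff_cexp_real.contDiffAt (x := z)) le_top]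
    exact ih z

noncomputable def chirpB (k : ℕ) (c : ℂ) : E k →L[ℝ] E k →L[ℝ] ℂ :=
  c • ((ContinuousLinearMap.compL ℝ (E k) ℝ ℂ Complex.ofRealCLM).comp (innerSL ℝ))

lemma chirpB_apply {k : ℕ} (c : ℂ) (x y : E k) :
    chirpB k c x y = c * (⟪x, y⟫ : ℂ) := rfl

lemma norm_iteratedFDeriv_id_le {k : ℕ} (n : ℕ) (x : E k) :
    ‖iteratedFDeriv ℝ n (id : E k → E k) x‖ ≤ 1 + ‖x‖ := by
  have h0 : (0:ℝ) ≤ ‖x‖ := norm_nonneg x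
  match n with
  | 0 => simpa [norm_iteratedFDeriv_zero] using by linarith
  | 1 =>
    rw [show (1:ℕ) = 0 + 1 from rfl, ← norm_iteratedFDeriv_fderiv]
    have : (fderiv ℝ (id : E k → E k)) = fun _ => ContinuousLinearMap.id ℝ (E k) :=
      funext fun y => fderiv_id
    rw [this, norm_iteratedFDeriv_zero]
    calc ‖ContinuousLinearMap.id ℝ (E k)‖ ≤ 1 := ContinuousLinearMap.norm_id_le
    _ ≤ 1 + ‖x‖ := by linarith
  | (n+2) =>
    rw [show n + 2 = (n+1) + 1 from rfl, ← norm_iteratedFDeriv_fderiv]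
    have : (fderiv ℝ (id : E k → E k)) = fun _ => ContinuousLinearMap.id ℝ (E k) :=
      funext fun y => fderiv_id
    rw [this, iteratedFDeriv_const_of_ne (Nat.succ_ne_zero n)]
    simpa using by linarith

lemma contDiff_chirpB_diag {k : ℕ} (c : ℂ) :
    ContDiff ℝ ⊤ (fun x : E k => chirpB k c x x) :=
  ((chirpB k c).contDiff).clm_apply contDiff_id

lemma norm_iteratedFDeriv_chirpB_diag {k : ℕ} (c : ℂ) (n : ℕ) (x : E k) :
    ‖iteratedFDeriv ℝ n (fun x : E k => chirpB k c x x) x‖ ≤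
      ‖chirpB k c‖ * 2 ^ n * (1 + ‖x‖) ^ 2 := by
  have h := (chirpB k c).norm_iteratedFDeriv_le_of_bilinear
    (contDiff_id (E := E k)) (contDiff_id (E := E k)) x (n := n) le_top
  refine h.trans ?_
  have h1 : ∀ i, ‖iteratedFDeriv ℝ i (id : E k → E k) x‖ ≤ 1 + ‖x‖ :=
    fun i => norm_iteratedFDeriv_id_le i x
  have hx : (0:ℝ) ≤ 1 + ‖x‖ := by positivity
  have hsum : ∑ i ∈ Finset.range (n + 1), (n.choose i : ℝ) *
        ‖iteratedFDeriv ℝ i (id : E k → E k) x‖ *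
        ‖iteratedFDeriv ℝ (n - i) (id : E k → E k) x‖
      ≤ ∑ i ∈ Finset.range (n + 1), (n.choose i : ℝ) * ((1 + ‖x‖) * (1 + ‖x‖)) := by
    refine Finset.sum_le_sum fun i _ => ?_
    have := mul_le_mul (h1 i) (h1 (n - i)) (norm_nonneg _) hx
    calc (n.choose i : ℝ) * ‖iteratedFDeriv ℝ i (id : E k → E k) x‖ *
          ‖iteratedFDeriv ℝ (n - i) (id : E k → E k) x‖
        = (n.choose i : ℝ) * (‖iteratedFDeriv ℝ i (id : E k → E k) x‖ *
          ‖iteratedFDeriv ℝ (n - i) (id : E k → E k) x‖) := by ring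
      _ ≤ (n.choose i : ℝ) * ((1 + ‖x‖) * (1 + ‖x‖)) := by
          exact mul_le_mul_of_nonneg_left this (by positivity)
  calc ‖chirpB k c‖ * ∑ i ∈ Finset.range (n + 1), (n.choose i : ℝ) *
        ‖iteratedFDeriv ℝ i (id : E k → E k) x‖ *
        ‖iteratedFDeriv ℝ (n - i) (id : E k → E k) x‖
      ≤ ‖chirpB k c‖ * ∑ i ∈ Finset.range (n + 1), (n.choose i : ℝ) * ((1 + ‖x‖) * (1 + ‖x‖)) :=
        mul_le_mul_of_nonneg_left hsum (by positivity)
    _ = ‖chirpB k c‖ * 2 ^ n * (1 + ‖x‖) ^ 2 := by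
        rw [← Finset.sum_mul, ← Nat.cast_sum, Nat.sum_range_choose]
        push_cast; ring

lemma hasTemperateGrowth_chirp {k : ℕ} (c : ℂ) (hc : c.re = 0) :
    Function.HasTemperateGrowth (fun x : E k => Complex.exp (chirpB k c x x)) := by
  set q : E k → ℂ := fun x => chirpB k c x x with hq
  refine ⟨(contDiff_cexp_real.comp (contDiff_chirpB_diag c)).of_le le_top, fun n => ?_⟩
  refine ⟨2 * n, (n.factorial : ℝ) * ((1 + ‖chirpB k c‖) * 2 ^ n) ^ n, fun x => ?_⟩
  set D : ℝ := (1 + ‖chirpB k c‖) * 2 ^ n * (1 + ‖x‖) ^ 2 with hD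
  have hBnn : (0:ℝ) ≤ ‖chirpB k c‖ := ContinuousLinearMap.opNorm_nonneg _
  have hD1 : (1:ℝ) ≤ D := by
    have h1 : (1:ℝ) ≤ 1 + ‖chirpB k c‖ := by linarith
    have h2 : (1:ℝ) ≤ (2:ℝ) ^ n := one_le_pow₀ (by norm_num)
    have h3 : (1:ℝ) ≤ (1 + ‖x‖) ^ 2 := one_le_pow₀ (by simp [norm_nonneg])
    have h12 : (1:ℝ) * 1 ≤ (1 + ‖chirpB k c‖) * 2 ^ n :=
      mul_le_mul h1 h2 (by norm_num) (by linarith)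
    have := mul_le_mul h12 h3 (by norm_num) (by nlinarith)
    rw [hD]; linarith
  have hqre : (q x).re = 0 := by
    rw [hq]; simp only [chirpB_apply, Complex.mul_re, hc]
    simp
    right; rw [← Complex.ofReal_pow, Complex.ofReal_im]
  have hC : ∀ i, i ≤ n → ‖iteratedFDeriv ℝ i Complex.exp (q x)‖ ≤ 1 := by
    intro i _
    rw [norm_iteratedFDeriv_cexp, Complex.norm_exp, hqre, Real.exp_zero]
  have hDq : ∀ i, 1 ≤ i → i ≤ n → ‖iteratedFDeriv ℝ i q x‖ ≤ D ^ i := by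
    intro i hi1 hin
    have := norm_iteratedFDeriv_chirpB_diag c i x
    have h2 : ‖chirpB k c‖ * 2 ^ i * (1 + ‖x‖) ^ 2 ≤ D := by
      rw [hD]
      have h2n : (2:ℝ) ^ i ≤ 2 ^ n := pow_le_pow_right₀ (by norm_num) hin
      have hx2 : (0:ℝ) ≤ (1 + ‖x‖) ^ 2 := by positivity
      have hb : ‖chirpB k c‖ * 2 ^ i ≤ (1 + ‖chirpB k c‖) * 2 ^ n :=
        mul_le_mul (by linarith) h2n (by positivity) (by linarith)
      exact mul_le_mul_of_nonneg_right hb hx2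
    calc ‖iteratedFDeriv ℝ i q x‖ ≤ D := le_trans this h2
      _ ≤ D ^ i := le_self_pow₀ hD1 (by omega)
  have hcomp := norm_iteratedFDeriv_comp_le contDiff_cexp_real (contDiff_chirpB_diag (k := k) c)
    (le_top) x hC hDq
  have : Complex.exp ∘ q = fun x => Complex.exp (q x) := rfl
  rw [this] at hcomp
  have hDn : D ^ n = ((1 + ‖chirpB k c‖) * 2 ^ n) ^ n * (1 + ‖x‖) ^ (2 * n) := by
    rw [hD, mul_pow, ← pow_mul]
  exact le_of_le_of_eq hcomp (by rw [mul_one, hDn, mul_assoc])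

lemma innerL_flip : (innerₗ (E k)).flip = innerₗ (E k) := by
  apply LinearMap.ext; intro x; apply LinearMap.ext; intro y
  simpa using real_inner_comm y x

lemma conj_fourierChar (t : ℝ) :
    (starRingEnd ℂ) ((Real.fourierChar t : Circle) : ℂ) = ((Real.fourierChar (-t) : Circle) : ℂ) := by
  rw [Real.fourierChar_apply, Real.fourierChar_apply, ← Complex.exp_conj]
  congr 1
  rw [map_mul, Complex.conj_I, Complex.conj_ofReal]
  push_cast
  ring

lemma fourier_conj (u : E k → ℂ) (x : E k) :
    𝓕 (fun v => (starRingEnd ℂ) (u v)) x = (starRingEnd ℂ) (𝓕⁻ u x) := by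
  rw [Real.fourier_eq, Real.fourierInv_eq, ← integral_conj]
  congr 1
  ext v
  simp only [Circle.smul_def, smul_eq_mul, map_mul, conj_fourierChar]

lemma mul_conj_self (z : ℂ) : z * (starRingEnd ℂ) z = ((‖z‖ ^ 2 : ℝ) : ℂ) := by
  rw [Complex.mul_conj, Complex.sq_norm]

lemma plancherel_schwartz (g : SchwartzMap (E k) ℂ) :
    ∫ ξ : E k, ‖𝓕 (⇑g) ξ‖ ^ 2 = ∫ x : E k, ‖g x‖ ^ 2 := by
  set G : SchwartzMap (E k) ℂ := SchwartzMap.fourierTransformCLM ℝ g with hGdef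
  have hG : ⇑G = 𝓕 ⇑g := by
    rw [hGdef, SchwartzMap.fourierTransformCLM_apply, SchwartzMap.fourier_coe]
  have hGint : Integrable (𝓕 ⇑g) volume := hG ▸ G.integrable
  have hint : Integrable (fun ξ : E k => (starRingEnd ℂ) (𝓕 ⇑g ξ)) volume := by
    refine hGint.mono ?_ (Filter.Eventually.of_forall fun ξ => by simp)
    exact (Complex.continuous_conj.comp (hG ▸ G.continuous)).aestronglyMeasurable
  have hflip := VectorFourier.integral_fourierIntegral_smul_eq_flip
    (μ := volume) (ν := volume) (L := innerₗ (E k))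
    Real.continuous_fourierChar (by exact continuous_inner) g.integrable hint
  rw [innerL_flip] at hflip
  have hL : ∀ ξ, VectorFourier.fourierIntegral 𝐞 volume (innerₗ (E k)) (⇑g) ξ = 𝓕 (⇑g) ξ :=
    fun _ => rfl
  have hR : ∀ x, VectorFourier.fourierIntegral 𝐞 volume (innerₗ (E k))
      (fun ξ : E k => (starRingEnd ℂ) (𝓕 ⇑g ξ)) x = (starRingEnd ℂ) (g x) := by
    intro x
    have h1 : VectorFourier.fourierIntegral 𝐞 volume (innerₗ (E k))
        (fun ξ : E k => (starRingEnd ℂ) (𝓕 ⇑g ξ)) x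
        = 𝓕 (fun ξ : E k => (starRingEnd ℂ) (𝓕 ⇑g ξ)) x := rfl
    rw [h1, fourier_conj]
    congr 1
    rw [g.continuous.fourierInv_fourier_eq g.integrable hGint]
  simp only [hL, hR] at hflip
  have lhs : ∫ ξ : E k, (𝓕 ⇑g ξ) • (starRingEnd ℂ) (𝓕 ⇑g ξ)
      = ((∫ ξ : E k, ‖𝓕 ⇑g ξ‖ ^ 2 : ℝ) : ℂ) := by
    calc ∫ ξ : E k, (𝓕 ⇑g ξ) • (starRingEnd ℂ) (𝓕 ⇑g ξ)
        = ∫ ξ : E k, ((‖𝓕 ⇑g ξ‖ ^ 2 : ℝ) : ℂ) := by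
          congr 1; ext ξ; rw [smul_eq_mul, mul_conj_self]
      _ = ((∫ ξ : E k, ‖𝓕 ⇑g ξ‖ ^ 2 : ℝ) : ℂ) := integral_ofReal
  have rhs : ∫ x : E k, (g x) • (starRingEnd ℂ) (g x)
      = ((∫ x : E k, ‖g x‖ ^ 2 : ℝ) : ℂ) := by
    calc ∫ x : E k, (g x) • (starRingEnd ℂ) (g x)
        = ∫ x : E k, ((‖g x‖ ^ 2 : ℝ) : ℂ) := by
          congr 1; ext x; rw [smul_eq_mul, mul_conj_self]
      _ = ((∫ x : E k, ‖g x‖ ^ 2 : ℝ) : ℂ) := integral_ofReal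
  rw [lhs, rhs] at hflip
  exact_mod_cast hflip

lemma e_eq_char (t : ℝ) : ((Real.fourierChar t : Circle) : ℂ) = e t := by
  rw [Real.fourierChar_apply, e]
  congr 1
  push_cast
  ring


/-- For `sin φ ≠ 0` and `f` Schwartz, `R(k_φ)` preserves the L² norm:
`∫ |[R(k_φ)f](w)|² dw = ∫ |f(v)|² dv`. -/
theorem shale_weil_kphi_unitary {k : ℕ} (hk : 0 < k)
    (φ : ℝ) (hφ : Real.sin φ ≠ 0) (f : SchwartzMap (E k) ℂ) :
    ∫ w : E k, ‖Rk φ (⇑f) w‖ ^ 2 = ∫ v : E k, ‖f v‖ ^ 2 := by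
  set s := Real.sin φ with hs
  obtain ⟨a, ha⟩ : ∃ a : ℝ, a = Real.cos φ / (2 * s) := ⟨_, rfl⟩
  obtain ⟨c, hc⟩ : ∃ c : ℂ, c = ((2 * Real.pi * a : ℝ) : ℂ) * Complex.I := ⟨_, rfl⟩
  have hcre : c.re = 0 := by simp [hc]
  -- the chirp times f, as a Schwartz function
  set g : SchwartzMap (E k) ℂ :=
    SchwartzMap.bilinLeftCLM (ContinuousLinearMap.mul ℝ ℂ)
      (hasTemperateGrowth_chirp c hcre) f with hg
  have hgval : ∀ v : E k, g v = f v * e (a * ‖v‖ ^ 2) := by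
    intro v
    have h1 : g v = f v * Complex.exp (chirpB k c v v) := rfl
    rw [h1, chirpB_apply, hc, e]
    congr 1
    rw [real_inner_self_eq_norm_sq]
    push_cast
    ring
  -- main pointwise identity
  have key : ∀ w : E k, Rk φ (⇑f) w
      = ((|s| ^ (-(k : ℝ) / 2) : ℝ) : ℂ) * (e (a * ‖w‖ ^ 2) * 𝓕 (⇑g) (s⁻¹ • w)) := by
    intro w
    rw [Rk]
    congr 1
    rw [Real.fourier_eq, ← integral_const_mul]
    congr 1
    ext v
    rw [Circle.smul_def, e_eq_char, hgval v]
    have harg : ((1 / 2) * (‖w‖ ^ 2 + ‖v‖ ^ 2) * Real.cos φ - ⟪w, v⟫) / s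
        = a * ‖w‖ ^ 2 + (-⟪v, s⁻¹ • w⟫ + a * ‖v‖ ^ 2) := by
      rw [real_inner_smul_right, real_inner_comm v w, ha]
      field_simp
      ring
    rw [harg, e_add, e_add, smul_eq_mul]
    ring
  -- take absolute values squared
  have habs : ∀ w : E k, ‖Rk φ (⇑f) w‖ ^ 2
      = ((|s| ^ (-(k : ℝ) / 2)) ^ 2) * ‖𝓕 (⇑g) (s⁻¹ • w)‖ ^ 2 := by
    intro w
    rw [key w, norm_mul, norm_mul, abs_e, Complex.norm_real, Real.norm_eq_abs, one_mul,
      _root_.abs_of_nonneg (Real.rpow_nonneg (abs_nonneg s) _)]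
    ring
  calc ∫ w : E k, ‖Rk φ (⇑f) w‖ ^ 2
      = ∫ w : E k, ((|s| ^ (-(k : ℝ) / 2)) ^ 2) * ‖𝓕 (⇑g) (s⁻¹ • w)‖ ^ 2 := by
        congr 1; ext w; exact habs w
    _ = ((|s| ^ (-(k : ℝ) / 2)) ^ 2) * ∫ w : E k, ‖𝓕 (⇑g) (s⁻¹ • w)‖ ^ 2 :=
        integral_const_mul _ _
    _ = ((|s| ^ (-(k : ℝ) / 2)) ^ 2) * (|((s⁻¹) ^ k)⁻¹|
          * ∫ ξ : E k, ‖𝓕 (⇑g) ξ‖ ^ 2) := by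
        have hco := Measure.integral_comp_smul (μ := (volume : Measure (E k)))
          (fun ξ : E k => ‖𝓕 (⇑g) ξ‖ ^ 2) s⁻¹
        simp only [smul_eq_mul, finrank_euclideanSpace_fin] at hco
        rw [hco]
    _ = ∫ ξ : E k, ‖𝓕 (⇑g) ξ‖ ^ 2 := by
        rw [← mul_assoc]
        have hsp : (0:ℝ) < |s| := abs_pos.mpr hφ
        have h1 : |((s⁻¹) ^ k)⁻¹| = |s| ^ (k : ℝ) := by
          rw [_root_.abs_inv, _root_.abs_pow, _root_.abs_inv, inv_pow, inv_inv,
            Real.rpow_natCast]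
        have h2 : (|s| ^ (-(k : ℝ) / 2)) ^ 2 = |s| ^ (-(k:ℝ)) := by
          rw [← Real.rpow_natCast (|s| ^ (-(k : ℝ) / 2)) 2, ← Real.rpow_mul (abs_nonneg s)]
          norm_num
        rw [h1, h2, ← Real.rpow_add hsp]
        norm_num
    _ = ∫ x : E k, ‖g x‖ ^ 2 := plancherel_schwartz g
    _ = ∫ v : E k, ‖f v‖ ^ 2 := by
        congr 1; ext v
        rw [hgval v, norm_mul, abs_e, mul_one]
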